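/- Let T_0 and T_1 be independent standard Gaussian real random variables, let θ ∈ ℝ, and let σ(t) = 1/(1 + e^{−t}) be the logistic sigmoid. Then the probability that T_1 + log σ(θ) > T_0 + log(1 − σ(θ)) equals Φ(θ/√2), where Φ is the cumulative distribution function of the standard normal distribution. Consequently, for every p ∈ (0,1) there exists θ ∈ ℝ (namely θ = √2 · Φ^{-1}(p)) such that this arg-max mechanism outputs the value 1 with probability exactly p. -/

import Mathlib

open MeasureTheory ProbabilityTheory

noncomputable def logisticSigmoid (t : ℝ) : ℝ := 1 / (1 + Real.exp (-t))

namespace NCMAux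

open Set Filter Topology Real

lemma log_sigmoid_sub (t : ℝ) :
    Real.log (logisticSigmoid t) - Real.log (1 - logisticSigmoid t) = t := by
  have h1 : (0:ℝ) < 1 + Real.exp (-t) := by positivity
  have hσ : logisticSigmoid t = 1 / (1 + Real.exp (-t)) := rfl
  have h2 : 1 - logisticSigmoid t = Real.exp (-t) / (1 + Real.exp (-t)) := by
    rw [hσ]; field_simp; ring
  rw [h2, hσ, Real.log_div one_ne_zero (ne_of_gt h1),
    Real.log_div (Real.exp_ne_zero _) (ne_of_gt h1), Real.log_one, Real.log_exp]
  ring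

noncomputable def rot : (ℝ × ℝ) →ₗ[ℝ] (ℝ × ℝ) :=
  Matrix.toLin (Module.Basis.finTwoProd ℝ) (Module.Basis.finTwoProd ℝ)
    !![(Real.sqrt 2)⁻¹, -(Real.sqrt 2)⁻¹; (Real.sqrt 2)⁻¹, (Real.sqrt 2)⁻¹]

lemma rot_apply (p : ℝ × ℝ) :
    rot p = ((Real.sqrt 2)⁻¹ * p.1 + -(Real.sqrt 2)⁻¹ * p.2,
             (Real.sqrt 2)⁻¹ * p.1 + (Real.sqrt 2)⁻¹ * p.2) :=
  Matrix.toLin_finTwoProd_apply _ _ _ _ p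

lemma sqrt2_inv_sq : (Real.sqrt 2)⁻¹ * (Real.sqrt 2)⁻¹ = 1/2 := by
  rw [← mul_inv]
  rw [Real.mul_self_sqrt (by norm_num)]; norm_num

lemma rot_det : LinearMap.det rot = 1 := by
  rw [rot, LinearMap.det_toLin, Matrix.det_fin_two_of]
  have := sqrt2_inv_sq
  nlinarith

lemma rot_measurable : Measurable rot :=
  rot.continuous_of_finiteDimensional.measurable

lemma rot_map_volume : Measure.map rot (volume : Measure (ℝ × ℝ)) = volume := by
  rw [Measure.map_linearMap_addHaar_eq_smul_addHaar _ (by rw [rot_det]; norm_num)]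
  simp [rot_det]

end NCMAux


namespace NCMAux

open Set Filter Topology Real

noncomputable def gpdf2 : ℝ × ℝ → ENNReal := fun p => gaussianPDF 0 1 p.1 * gaussianPDF 0 1 p.2

lemma gpdf2_measurable : Measurable gpdf2 :=
  ((measurable_gaussianPDF 0 1).comp measurable_fst).mul
    ((measurable_gaussianPDF 0 1).comp measurable_snd)

lemma prod_gaussian_eq :
    (gaussianReal 0 1).prod (gaussianReal 0 1) = (volume : Measure (ℝ × ℝ)).withDensity gpdf2 := by
  have hμ : gaussianReal 0 1 = volume.withDensity (gaussianPDF 0 1) :=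
    gaussianReal_of_var_ne_zero 0 one_ne_zero
  refine Measure.prod_eq fun s t hs ht => ?_
  rw [withDensity_apply _ (hs.prod ht), Measure.volume_eq_prod, ← Measure.prod_restrict]
  rw [show (fun p : ℝ × ℝ => gpdf2 p) = fun p : ℝ × ℝ => gaussianPDF 0 1 p.1 * gaussianPDF 0 1 p.2
      from rfl]
  rw [lintegral_prod_mul (measurable_gaussianPDF 0 1).aemeasurable
      (measurable_gaussianPDF 0 1).aemeasurable,
    hμ, withDensity_apply _ hs, withDensity_apply _ ht]

lemma gpdf2_rot (p : ℝ × ℝ) : gpdf2 (rot p) = gpdf2 p := by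
  obtain ⟨x, y⟩ := p
  simp only [gpdf2, rot_apply, gaussianPDF]
  rw [← ENNReal.ofReal_mul (gaussianPDFReal_nonneg _ _ _),
    ← ENNReal.ofReal_mul (gaussianPDFReal_nonneg _ _ _)]
  congr 1
  unfold gaussianPDFReal
  conv_lhs => rw [mul_mul_mul_comm]
  conv_rhs => rw [mul_mul_mul_comm]
  rw [← Real.exp_add, ← Real.exp_add]
  congr 1
  push_cast
  have h2 := sqrt2_inv_sq
  field_simp
  rw [Real.exp_eq_exp, Real.sq_sqrt (by norm_num : (0:ℝ) ≤ 2)]; ring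

lemma withDensity_rot_invariant {S : Set (ℝ × ℝ)} (hS : MeasurableSet S) :
    (volume.withDensity gpdf2) (rot ⁻¹' S) = (volume.withDensity gpdf2) S := by
  rw [withDensity_apply _ hS, withDensity_apply _ (rot_measurable hS)]
  calc ∫⁻ p in rot ⁻¹' S, gpdf2 p = ∫⁻ p in rot ⁻¹' S, gpdf2 (rot p) := by
        simp only [gpdf2_rot]
    _ = ∫⁻ p in S, gpdf2 p ∂(Measure.map rot volume) :=
        (setLIntegral_map hS gpdf2_measurable rot_measurable).symm
    _ = ∫⁻ p in S, gpdf2 p := by rw [rot_map_volume]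

lemma main (θ : ℝ) :
    ((gaussianReal 0 1).prod (gaussianReal 0 1))
        {p : ℝ × ℝ |
          p.1 + Real.log (1 - logisticSigmoid θ) < p.2 + Real.log (logisticSigmoid θ)}
      = ENNReal.ofReal (cdf (gaussianReal 0 1) (θ / Real.sqrt 2)) := by
  have hsqrt : (0:ℝ) < Real.sqrt 2 := Real.sqrt_pos.mpr (by norm_num)
  have hset : {p : ℝ × ℝ |
        p.1 + Real.log (1 - logisticSigmoid θ) < p.2 + Real.log (logisticSigmoid θ)}
      = rot ⁻¹' ((Iio (θ / Real.sqrt 2)) ×ˢ univ) := by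
    ext p
    simp only [mem_setOf_eq, mem_preimage, rot_apply, mem_prod, mem_Iio, mem_univ, and_true]
    have hl := log_sigmoid_sub θ
    have hrw : (Real.sqrt 2)⁻¹ * p.1 + -(Real.sqrt 2)⁻¹ * p.2 = (p.1 - p.2) / Real.sqrt 2 := by
      field_simp
      ring
    rw [hrw, div_lt_div_iff_of_pos_right hsqrt]
    constructor <;> intro h <;> linarith
  rw [hset, prod_gaussian_eq, withDensity_rot_invariant (measurableSet_Iio.prod MeasurableSet.univ),
    ← prod_gaussian_eq, Measure.prod_prod, measure_univ, mul_one]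
  have h0 : (gaussianReal 0 1) {θ / Real.sqrt 2} = 0 :=
    gaussianReal_absolutelyContinuous 0 one_ne_zero Real.volume_singleton
  have hIio : (gaussianReal 0 1) (Iio (θ / Real.sqrt 2))
      = (gaussianReal 0 1) (Iic (θ / Real.sqrt 2)) := by
    rw [← Set.Iio_union_right, measure_union (by simp) (measurableSet_singleton _), h0, add_zero]
  rw [hIio, ofReal_cdf]

lemma cdf_gaussian_continuous : Continuous (cdf (gaussianReal 0 1)) := by
  rw [continuous_iff_continuousAt]
  intro x
  have hmono := monotone_cdf (gaussianReal 0 1)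
  rw [hmono.continuousAt_iff_leftLim_eq_rightLim, (cdf (gaussianReal 0 1)).rightLim_eq]
  have hs : (cdf (gaussianReal 0 1)).measure {x} = 0 := by
    rw [measure_cdf]
    exact gaussianReal_absolutelyContinuous 0 one_ne_zero Real.volume_singleton
  rw [StieltjesFunction.measure_singleton] at hs
  have h1 : Function.leftLim (cdf (gaussianReal 0 1)) x ≤ cdf (gaussianReal 0 1) x :=
    hmono.leftLim_le le_rfl
  have h2 : cdf (gaussianReal 0 1) x - Function.leftLim (cdf (gaussianReal 0 1)) x ≤ 0 :=
    ENNReal.ofReal_eq_zero.mp hs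
  linarith

end NCMAux

/-- **Output distribution of the NCM arg-max mechanism (Eq. (3)).**
If `T₀, T₁` are independent standard Gaussians, then
`P(T₁ + log σ(θ) > T₀ + log (1 - σ(θ))) = Φ(θ/√2)`, where `Φ` is the standard
normal cdf; consequently every Bernoulli output probability `p ∈ (0,1)` is
realized by some logit `θ`. -/
theorem ncm_argmax_output_distribution (θ : ℝ) :
    ((gaussianReal 0 1).prod (gaussianReal 0 1))
        {p : ℝ × ℝ |
          p.1 + Real.log (1 - logisticSigmoid θ) < p.2 + Real.log (logisticSigmoid θ)}
      = ENNReal.ofReal (cdf (gaussianReal 0 1) (θ / Real.sqrt 2)) ∧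
    ∀ p ∈ Set.Ioo (0 : ℝ) 1, ∃ θ' : ℝ,
      ((gaussianReal 0 1).prod (gaussianReal 0 1))
          {q : ℝ × ℝ |
            q.1 + Real.log (1 - logisticSigmoid θ') < q.2 + Real.log (logisticSigmoid θ')}
        = ENNReal.ofReal p := by
  refine ⟨NCMAux.main θ, fun p hp => ?_⟩
  obtain ⟨a, ha⟩ := ((tendsto_cdf_atBot (gaussianReal 0 1)).eventually
    (gt_mem_nhds hp.1)).exists
  obtain ⟨b, hb⟩ := ((tendsto_cdf_atTop (gaussianReal 0 1)).eventually
    (lt_mem_nhds hp.2)).exists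
  have hab : a ≤ b := by
    by_contra h
    push_neg at h
    have := monotone_cdf (gaussianReal 0 1) h.le
    linarith
  obtain ⟨c, -, hc⟩ := intermediate_value_Icc hab
    (NCMAux.cdf_gaussian_continuous.continuousOn) ⟨ha.le, hb.le⟩
  have hsqrt : (0:ℝ) < Real.sqrt 2 := Real.sqrt_pos.mpr (by norm_num)
  refine ⟨Real.sqrt 2 * c, ?_⟩
  rw [NCMAux.main, mul_div_cancel_left₀ c (ne_of_gt hsqrt), hc]
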